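/- arXiv:2404.17527 — 3 statements merged into one kernel-verified Lean document; each statement's English description precedes it below -/
import Mathlib

section
/- Suppose β, γ ∈ (0,1) with β² + γ² = 1, L > 0, sin(γL) = γ and cos(γL) = −β. For z ∈ [0, L], define I_{z,1} = ∫₀^z e^{−βx} sin(γ(L−x)) dx and Ĩ_{z,3} = (1+8γ²)·∫₀^z e^{−βx} sin(3γ(L−x)) dx. Then 3 I_{z,1} − Ĩ_{z,3} = 16βγ³ − 4 e^{−βz} sin(γ(L−z))² (β sin(γ(L−z)) − 3γ cos(γ(L−z))). -/
open Real

lemma aux_deriv (β c L x : ℝ) :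
    HasDerivAt (fun x => Real.exp (-(β*x)) * (-β * Real.sin (c*(L-x)) + c * Real.cos (c*(L-x))))
      ((β^2 + c^2) * (Real.exp (-(β*x)) * Real.sin (c*(L-x)))) x := by
  have he : HasDerivAt (fun x : ℝ => Real.exp (-(β*x))) (-β * Real.exp (-(β*x))) x := by
    have h0 : HasDerivAt (fun x : ℝ => -(β*x)) (-β) x := by
      simpa using (hasDerivAt_id x).const_mul (-β)
    simpa [mul_comm] using h0.exp
  have harg : HasDerivAt (fun x : ℝ => c*(L-x)) (-c) x := by
    have := ((hasDerivAt_id x).const_sub L).const_mul c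
    simpa using this
  have hs : HasDerivAt (fun x => Real.sin (c*(L-x))) (Real.cos (c*(L-x)) * (-c)) x := harg.sin
  have hc : HasDerivAt (fun x => Real.cos (c*(L-x))) (-Real.sin (c*(L-x)) * (-c)) x := harg.cos
  have h := he.mul ((hs.const_mul (-β)).add (hc.const_mul c))
  refine h.congr_deriv ?_
  simp only [Pi.add_apply]
  ring

theorem combination_Iz1_Iz3 (β γ L z : ℝ) (hβ : β ∈ Set.Ioo (0:ℝ) 1)
    (hγ : γ ∈ Set.Ioo (0:ℝ) 1) (hpyth : β^2 + γ^2 = 1) (hL : 0 < L)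
    (hsin : Real.sin (γ * L) = γ) (hcos : Real.cos (γ * L) = -β)
    (hz : z ∈ Set.Icc (0:ℝ) L) :
    3 * (∫ x in (0:ℝ)..z, Real.exp (-(β * x)) * Real.sin (γ * (L - x)))
      - (1 + 8 * γ^2) * ∫ x in (0:ℝ)..z, Real.exp (-(β * x)) * Real.sin (3 * γ * (L - x))
      = 16 * β * γ^3
        - 4 * Real.exp (-(β * z)) * Real.sin (γ * (L - z))^2
            * (β * Real.sin (γ * (L - z)) - 3 * γ * Real.cos (γ * (L - z))) := by
  have hcont1 : IntervalIntegrable (fun x => Real.exp (-(β * x)) * Real.sin (γ * (L - x)))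
      MeasureTheory.volume 0 z := (by continuity : Continuous fun x => Real.exp (-(β * x)) * Real.sin (γ * (L - x))).intervalIntegrable 0 z
  have hcont3 : IntervalIntegrable (fun x => (1 + 8*γ^2) * (Real.exp (-(β * x)) * Real.sin (3 * γ * (L - x))))
      MeasureTheory.volume 0 z := (by continuity : Continuous fun x => (1 + 8*γ^2) * (Real.exp (-(β * x)) * Real.sin (3 * γ * (L - x)))).intervalIntegrable 0 z
  have I1 : (∫ x in (0:ℝ)..z, Real.exp (-(β * x)) * Real.sin (γ * (L - x)))
      = (Real.exp (-(β*z)) * (-β * Real.sin (γ*(L-z)) + γ * Real.cos (γ*(L-z))))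
        - (Real.exp (-(β*0)) * (-β * Real.sin (γ*(L-0)) + γ * Real.cos (γ*(L-0)))) := by
    apply intervalIntegral.integral_eq_sub_of_hasDerivAt
    · intro x _
      have := aux_deriv β γ L x
      rwa [hpyth, one_mul] at this
    · exact hcont1
  have I3 : (∫ x in (0:ℝ)..z, (1 + 8*γ^2) * (Real.exp (-(β * x)) * Real.sin (3 * γ * (L - x))))
      = (Real.exp (-(β*z)) * (-β * Real.sin (3*γ*(L-z)) + 3*γ * Real.cos (3*γ*(L-z))))
        - (Real.exp (-(β*0)) * (-β * Real.sin (3*γ*(L-0)) + 3*γ * Real.cos (3*γ*(L-0)))) := by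
    apply intervalIntegral.integral_eq_sub_of_hasDerivAt
    · intro x _
      have := aux_deriv β (3*γ) L x
      have h9 : β^2 + (3*γ)^2 = 1 + 8*γ^2 := by nlinarith [hpyth]
      rw [h9] at this
      convert this using 2 <;> ring_nf
    · exact hcont3
  have I3' : (1 + 8 * γ^2) * (∫ x in (0:ℝ)..z, Real.exp (-(β * x)) * Real.sin (3 * γ * (L - x)))
      = (Real.exp (-(β*z)) * (-β * Real.sin (3*γ*(L-z)) + 3*γ * Real.cos (3*γ*(L-z))))
        - (Real.exp (-(β*0)) * (-β * Real.sin (3*γ*(L-0)) + 3*γ * Real.cos (3*γ*(L-0)))) := by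
    rw [← I3, ← intervalIntegral.integral_const_mul]
  rw [I1, I3']
  have e0 : Real.exp (-(β*0)) = 1 := by norm_num
  have hL0 : L - (0:ℝ) = L := by ring
  rw [e0, hL0]
  have h3z : 3*γ*(L-z) = 3*(γ*(L-z)) := by ring
  have h3L : 3*γ*L = 3*(γ*L) := by ring
  rw [h3z, h3L, Real.sin_three_mul, Real.cos_three_mul, Real.sin_three_mul, Real.cos_three_mul,
      hsin, hcos]
  have hsc : Real.sin (γ*(L-z))^2 + Real.cos (γ*(L-z))^2 = 1 := Real.sin_sq_add_cos_sq _
  linear_combination (-12*γ*Real.cos (γ*(L-z))*Real.exp (-(β*z))) * hsc + (-12*β*γ) * hpyth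
end

section
/- The function β ↦ L_β := (arctan(−√(1−β²)/β) + π)/√(1−β²) is strictly increasing on (0,1), satisfies L_β → π/2 as β → 0⁺, and L_β → ∞ as β → 1⁻. -/
open Real Filter

private lemma key_eq {β : ℝ} (h0 : 0 < β) :
    Real.arctan (-Real.sqrt (1 - β^2) / β) + Real.pi = Real.arccos (-β) := by
  rw [Real.arccos_neg, Real.arccos_eq_arctan h0, neg_div, Real.arctan_neg]
  ring

theorem L_beta_monotone_limits :
    StrictMonoOn
      (fun β : ℝ => (Real.arctan (-Real.sqrt (1 - β^2) / β) + Real.pi) / Real.sqrt (1 - β^2))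
      (Set.Ioo 0 1) ∧
    Tendsto
      (fun β : ℝ => (Real.arctan (-Real.sqrt (1 - β^2) / β) + Real.pi) / Real.sqrt (1 - β^2))
      (nhdsWithin 0 (Set.Ioo 0 1)) (nhds (Real.pi / 2)) ∧
    Tendsto
      (fun β : ℝ => (Real.arctan (-Real.sqrt (1 - β^2) / β) + Real.pi) / Real.sqrt (1 - β^2))
      (nhdsWithin 1 (Set.Ioo 0 1)) atTop := by
  refine ⟨?_, ?_, ?_⟩
  · -- strict monotonicity
    intro a ha b hb hab
    simp only
    rw [key_eq ha.1, key_eq hb.1]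
    have h1a : (0:ℝ) < Real.sqrt (1 - a^2) := Real.sqrt_pos.mpr (by nlinarith [ha.1, ha.2])
    have h1b : (0:ℝ) < Real.sqrt (1 - b^2) := Real.sqrt_pos.mpr (by nlinarith [hb.1, hb.2])
    have hnum : Real.arccos (-a) < Real.arccos (-b) := by
      apply Real.strictAntiOn_arccos ⟨by linarith [hb.2], by linarith [hb.1]⟩
        ⟨by linarith [ha.2], by linarith [ha.1]⟩ (by linarith)
    have hbpos : 0 < Real.arccos (-b) := Real.arccos_pos.mpr (by linarith [hb.1])
    have hden : Real.sqrt (1 - b^2) < Real.sqrt (1 - a^2) :=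
      Real.sqrt_lt_sqrt (by nlinarith [hb.1, hb.2]) (by nlinarith [ha.1, hb.2])
    calc Real.arccos (-a) / Real.sqrt (1 - a^2)
        < Real.arccos (-b) / Real.sqrt (1 - a^2) := by
          exact (div_lt_div_iff_of_pos_right h1a).mpr hnum
      _ < Real.arccos (-b) / Real.sqrt (1 - b^2) :=
          div_lt_div_of_pos_left hbpos h1b hden
  · -- limit at 0
    have hcont : ContinuousAt (fun β : ℝ => Real.arccos (-β) / Real.sqrt (1 - β^2)) 0 := by
      apply ContinuousAt.div
      · exact (Real.continuous_arccos.comp continuous_neg).continuousAt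
      · exact ((continuous_const.sub (continuous_pow 2)).sqrt).continuousAt
      · norm_num
    have h0 : Tendsto (fun β : ℝ => Real.arccos (-β) / Real.sqrt (1 - β^2))
        (nhdsWithin 0 (Set.Ioo 0 1)) (nhds (Real.pi / 2)) := by
      have := hcont.tendsto.mono_left (nhdsWithin_le_nhds (s := Set.Ioo (0:ℝ) 1))
      simpa [Real.arccos_zero] using this
    refine h0.congr' ?_
    filter_upwards [self_mem_nhdsWithin] with β hβ
    rw [key_eq hβ.1]
  · -- limit at 1
    have hnum : Tendsto (fun β : ℝ => Real.arccos (-β)) (nhdsWithin 1 (Set.Ioo 0 1))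
        (nhds Real.pi) := by
      have := ((Real.continuous_arccos.comp continuous_neg).tendsto 1).mono_left
        (nhdsWithin_le_nhds (s := Set.Ioo (0:ℝ) 1))
      simpa [Real.arccos_neg_one, Function.comp_def] using this
    have hden : Tendsto (fun β : ℝ => Real.sqrt (1 - β^2)) (nhdsWithin 1 (Set.Ioo 0 1))
        (nhdsWithin 0 (Set.Ioi 0)) := by
      apply tendsto_nhdsWithin_of_tendsto_nhds_of_eventually_within
      · have hc : Continuous fun β : ℝ => Real.sqrt (1 - β^2) :=
          (continuous_const.sub (continuous_pow 2)).sqrt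
        have := (hc.tendsto 1).mono_left (nhdsWithin_le_nhds (s := Set.Ioo (0:ℝ) 1))
        simpa using this
      · filter_upwards [self_mem_nhdsWithin] with β hβ
        exact Real.sqrt_pos.mpr (by nlinarith [hβ.1, hβ.2])
    have hinv : Tendsto (fun β : ℝ => (Real.sqrt (1 - β^2))⁻¹)
        (nhdsWithin 1 (Set.Ioo 0 1)) atTop := tendsto_inv_nhdsGT_zero.comp hden
    have h1 : Tendsto (fun β : ℝ => Real.arccos (-β) / Real.sqrt (1 - β^2))
        (nhdsWithin 1 (Set.Ioo 0 1)) atTop := by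
      simpa [div_eq_mul_inv] using Tendsto.pos_mul_atTop Real.pi_pos hnum hinv
    refine h1.congr' ?_
    filter_upwards [self_mem_nhdsWithin] with β hβ
    rw [key_eq hβ.1]
end

section
/- Suppose λ is an eigenvalue of the Sturm–Liouville problem (1/2)v'' = λv on (0,L) with v'(0) = βv(0), v(L) = 0, and v not identically zero, where β > 0 and L > 0. Then λ < 0, and writing μ = √(−2λ), one has tan(μL) = −μ/β. -/
open Real

theorem SL_eigenvalue_characterization (β L lam : ℝ) (hβ : 0 < β) (hL : 0 < L)
    (v v' v'' : ℝ → ℝ)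
    (hv' : ∀ x ∈ Set.Icc (0:ℝ) L, HasDerivAt v (v' x) x)
    (hv'' : ∀ x ∈ Set.Icc (0:ℝ) L, HasDerivAt v' (v'' x) x)
    (hcont : ContinuousOn v'' (Set.Icc (0:ℝ) L))
    (hode : ∀ x ∈ Set.Ioo (0:ℝ) L, (1/2) * v'' x = lam * v x)
    (hbc0 : v' 0 = β * v 0) (hbcL : v L = 0)
    (hnz : ∃ x ∈ Set.Icc (0:ℝ) L, v x ≠ 0) :
    lam < 0 ∧
      Real.tan (Real.sqrt (-2 * lam) * L) = -Real.sqrt (-2 * lam) / β := by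
  have h0L : (0:ℝ) ∈ Set.Icc (0:ℝ) L := ⟨le_refl _, hL.le⟩
  have hLmem : L ∈ Set.Icc (0:ℝ) L := ⟨hL.le, le_refl _⟩
  have hvC : ContinuousOn v (Set.Icc 0 L) := fun x hx =>
    (hv' x hx).continuousAt.continuousWithinAt
  have hv'C : ContinuousOn v' (Set.Icc 0 L) := fun x hx =>
    (hv'' x hx).continuousAt.continuousWithinAt
  -- the ODE holds on the closed interval, by continuity
  have hode2 : ∀ x ∈ Set.Icc (0:ℝ) L, v'' x = 2 * lam * v x := by
    intro x hx
    have hcl : x ∈ closure (Set.Ioo (0:ℝ) L) := by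
      rwa [closure_Ioo hL.ne]
    have hne : (nhdsWithin x (Set.Ioo (0:ℝ) L)).NeBot :=
      mem_closure_iff_nhdsWithin_neBot.mp hcl
    have hgC : ContinuousOn (fun y => v'' y - 2 * lam * v y) (Set.Icc (0:ℝ) L) :=
      hcont.sub (continuousOn_const.mul hvC)
    have h1 : Filter.Tendsto (fun y => v'' y - 2 * lam * v y)
        (nhdsWithin x (Set.Ioo (0:ℝ) L)) (nhds (v'' x - 2 * lam * v x)) :=
      ((hgC x hx).mono Set.Ioo_subset_Icc_self)
    have h2 : Filter.Tendsto (fun y => v'' y - 2 * lam * v y)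
        (nhdsWithin x (Set.Ioo (0:ℝ) L)) (nhds 0) := by
      apply Filter.Tendsto.congr' _ tendsto_const_nhds
      filter_upwards [self_mem_nhdsWithin] with y hy
      have := hode y hy
      linarith
    have := tendsto_nhds_unique h1 h2
    linarith
  -- uniqueness: if v 0 = 0 then v ≡ 0 on [0, L]
  have hv0 : v 0 ≠ 0 := by
    intro h0
    have h0' : v' 0 = 0 := by rw [hbc0, h0, mul_zero]
    set A : (ℝ × ℝ) →L[ℝ] (ℝ × ℝ) :=
      (ContinuousLinearMap.snd ℝ ℝ ℝ).prod ((2 * lam) • ContinuousLinearMap.fst ℝ ℝ ℝ) with hA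
    have hlip : ∀ t : ℝ, LipschitzOnWith ‖A‖₊ (fun p => A p) (Set.univ) :=
      fun _ => A.lipschitz.lipschitzOnWith
    have key : Set.EqOn (fun x => (v x, v' x)) (fun _ => ((0:ℝ), (0:ℝ))) (Set.Icc 0 L) := by
      apply ODE_solution_unique_of_mem_Icc_right (v := fun _ p => A p) (s := fun _ => Set.univ)
        (fun t _ => hlip t)
      · exact hvC.prodMk hv'C
      · intro t ht
        have htI : t ∈ Set.Icc (0:ℝ) L := Set.Ico_subset_Icc_self ht
        have hd : HasDerivAt (fun x => (v x, v' x)) (v' t, v'' t) t :=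
          (hv' t htI).prodMk (hv'' t htI)
        have : A (v t, v' t) = (v' t, v'' t) := by
          simp [hA, hode2 t htI]
        rw [← this] at hd
        exact hd.hasDerivWithinAt
      · intro t _; trivial
      · exact continuousOn_const
      · intro t ht
        convert (hasDerivAt_const t ((0:ℝ), (0:ℝ))).hasDerivWithinAt using 1
        simp [hA]
      · intro t _; trivial
      · simp [h0, h0']
    obtain ⟨x, hx, hxne⟩ := hnz
    exact hxne (congrArg Prod.fst (key hx))
  -- lam < 0
  have hlam : lam < 0 := by
    by_contra hlt
    push_neg at hlt
    set W : ℝ → ℝ := fun x => v x * v' x with hW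
    have hWd : ∀ x ∈ Set.Icc (0:ℝ) L, HasDerivAt W (v' x * v' x + v x * v'' x) x :=
      fun x hx => (hv' x hx).mul (hv'' x hx)
    have hmono : MonotoneOn W (Set.Icc 0 L) := by
      apply monotoneOn_of_deriv_nonneg (convex_Icc 0 L) (hvC.mul hv'C)
      · intro x hx
        rw [interior_Icc] at hx
        exact (hWd x (Set.Ioo_subset_Icc_self hx)).differentiableAt.differentiableWithinAt
      · intro x hx
        rw [interior_Icc] at hx
        have hxI := Set.Ioo_subset_Icc_self hx
        rw [show deriv (v * v') x = _ from (hWd x hxI).deriv, hode2 x hxI]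
        nlinarith [sq_nonneg (v' x), sq_nonneg (v x), mul_nonneg hlt (sq_nonneg (v x))]
    have hle : W 0 ≤ W L := hmono h0L hLmem hL.le
    have hWL : W L = 0 := by simp [hW, hbcL]
    have hW0 : W 0 = β * v 0 ^ 2 := by simp [hW, hbc0]; ring
    have hsq : v 0 ^ 2 ≤ 0 := by
      rw [hWL, hW0] at hle
      nlinarith
    exact hv0 ((pow_eq_zero_iff two_ne_zero).mp (le_antisymm hsq (sq_nonneg _)))
  refine ⟨hlam, ?_⟩
  set μ : ℝ := Real.sqrt (-2 * lam) with hμ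
  have hμ2 : μ ^ 2 = -2 * lam := Real.sq_sqrt (by linarith)
  have hμpos : 0 < μ := Real.sqrt_pos.mpr (by linarith)
  -- the comparison solution u x = sin (μ (L - x))
  have hg : ∀ x : ℝ, HasDerivAt (fun y => μ * (L - y)) (-μ) x := by
    intro x
    simpa using ((hasDerivAt_id x).const_sub L).const_mul μ
  have hu : ∀ x : ℝ, HasDerivAt (fun y => Real.sin (μ * (L - y)))
      (Real.cos (μ * (L - x)) * (-μ)) x :=
    fun x => (Real.hasDerivAt_sin _).comp x (hg x)
  have hu' : ∀ x : ℝ, HasDerivAt (fun y => Real.cos (μ * (L - y)) * (-μ))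
      (2 * lam * Real.sin (μ * (L - x))) x := by
    intro x
    have h := ((Real.hasDerivAt_cos _).comp x (hg x)).mul_const (-μ)
    refine h.congr_deriv ?_
    linear_combination (-Real.sin (μ * (L - x))) * hμ2
  set W2 : ℝ → ℝ := fun x =>
    v x * (Real.cos (μ * (L - x)) * (-μ)) - v' x * Real.sin (μ * (L - x)) with hW2
  have hW2d : ∀ x ∈ Set.Icc (0:ℝ) L, HasDerivAt W2 0 x := by
    intro x hx
    have h := ((hv' x hx).mul (hu' x)).sub ((hv'' x hx).mul (hu x))
    refine h.congr_deriv ?_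
    rw [hode2 x hx]
    ring
  have hW2C : ContinuousOn W2 (Set.Icc 0 L) := fun x hx =>
    (hW2d x hx).continuousAt.continuousWithinAt
  have hconst := constant_of_has_deriv_right_zero hW2C
    (fun x hx => (hW2d x (Set.Ico_subset_Icc_self hx)).hasDerivWithinAt)
  have hW20 : v 0 * (μ * Real.cos (μ * L) + β * Real.sin (μ * L)) = 0 := by
    have h := hconst L hLmem
    simp only [hW2, hbcL, sub_self, mul_zero, Real.sin_zero, Real.cos_zero, sub_zero,
      zero_mul, one_mul, zero_sub, hbc0] at h
    linear_combination h
  have hkey : μ * Real.cos (μ * L) + β * Real.sin (μ * L) = 0 :=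
    (mul_eq_zero.mp hW20).resolve_left hv0
  have hcos : Real.cos (μ * L) ≠ 0 := by
    intro hc
    have hs : Real.sin (μ * L) = 0 := by
      rw [hc, mul_zero, zero_add] at hkey
      exact (mul_eq_zero.mp hkey).resolve_left hβ.ne'
    have h1 := Real.sin_sq_add_cos_sq (μ * L)
    rw [hs, hc] at h1
    norm_num at h1
  rw [Real.tan_eq_sin_div_cos, div_eq_div_iff hcos hβ.ne']
  linarith [hkey]
end
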